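/- Under conditions (1)–(4) of the EBVASS-to-FO2 encoding, at the root of the tree the number of I_i-labeled nodes equals the number of D_i-labeled nodes, for each i. -/
import Mathlib


/-- Binary trees over an alphabet `E`. -/
inductive BTree (E : Type) : Type
  | leaf : E → BTree E
  | node : E → BTree E → BTree E → BTree E

def BTree.label {E : Type} : BTree E → E
  | .leaf a => a
  | .node a _ _ => a

/-- The subtree at a position (`false` = left child, `true` = right child). -/
def BTree.get? {E : Type} : BTree E → List Bool → Option (BTree E)
  | t, [] => some t
  | .leaf _, _ :: _ => none
  | .node _ l r, b :: p => (if b then r else l).get? p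

/-- The label at a position, if it exists. -/
def BTree.label? {E : Type} (t : BTree E) (p : List Bool) : Option E :=
  (t.get? p).map BTree.label

/-- The number of nodes of `t` whose label satisfies `g`. -/
def bcount {E : Type} (g : E → Bool) : BTree E → ℕ
  | .leaf a => if g a then 1 else 0
  | .node a l r => (if g a then 1 else 0) + bcount g l + bcount g r

section

variable {L D : Type} (isD isI : L → Bool) (t : BTree (L × D))

/-- (1) No two `D_i`-labeled nodes share a data value. -/
def CondD_key : Prop :=
  ∀ (p q : List Bool) (l1 l2 : L) (d : D),
    t.label? p = some (l1, d) → t.label? q = some (l2, d) →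
    isD l1 = true → isD l2 = true → p = q

/-- (2) No two `I_i`-labeled nodes share a data value. -/
def CondI_key : Prop :=
  ∀ (p q : List Bool) (l1 l2 : L) (d : D),
    t.label? p = some (l1, d) → t.label? q = some (l2, d) →
    isI l1 = true → isI l2 = true → p = q

/-- (3) Every `D_i`-labeled node has a proper descendant labeled `I_i` with the
same data value. -/
def CondD_matched : Prop :=
  ∀ (p : List Bool) (l : L) (d : D),
    t.label? p = some (l, d) → isD l = true →
    ∃ (r : List Bool) (l' : L), r ≠ [] ∧
      t.label? (p ++ r) = some (l', d) ∧ isI l' = true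

/-- (4) Every `I_i`-labeled node has a proper ancestor labeled `D_i` with the
same data value. -/
def CondI_matched : Prop :=
  ∀ (p : List Bool) (l : L) (d : D),
    t.label? p = some (l, d) → isI l = true →
    ∃ (q r : List Bool) (l' : L), p = q ++ r ∧ r ≠ [] ∧
      t.label? q = some (l', d) ∧ isD l' = true

end

namespace BTree

/-- All valid positions in a tree. -/
def poss {E : Type} : BTree E → List (List Bool)
  | .leaf _ => [[]]
  | .node _ l r =>
      [] :: ((poss l).map (List.cons false) ++ (poss r).map (List.cons true))

theorem nodup_poss {E : Type} (t : BTree E) : t.poss.Nodup := by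
  induction t with
  | leaf a => simp [poss]
  | node a l r ihl ihr =>
    rw [poss, List.nodup_cons]
    constructor
    · simp
    · refine List.Nodup.append (ihl.map ?_) (ihr.map ?_) ?_
      · intro x y h; simpa using h
      · intro x y h; simpa using h
      · intro x hx hy
        simp only [List.mem_map] at hx hy
        obtain ⟨p, _, rfl⟩ := hx
        obtain ⟨q, _, hq⟩ := hy
        simp at hq

theorem mem_poss {E : Type} (t : BTree E) (p : List Bool) :
    p ∈ t.poss ↔ (t.get? p).isSome := by
  induction t generalizing p with
  | leaf a => cases p <;> simp [poss, BTree.get?]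
  | node a l r ihl ihr =>
    cases p with
    | nil => simp [poss, BTree.get?]
    | cons b q =>
      cases b <;>
        simp [poss, BTree.get?, ihl, ihr, List.mem_map]

theorem bcount_eq_length {E : Type} (g : E → Bool) (t : BTree E) :
    bcount g t =
      ((poss t).filter
        (fun p => ((t.label? p).map g).getD false)).length := by
  induction t with
  | leaf a =>
    by_cases h : g a <;>
      simp [poss, bcount, BTree.label?, BTree.get?, BTree.label, h]
  | node a l r ihl ihr =>
    have hl : ∀ q : List Bool,
        (BTree.node a l r).label? (false :: q) = l.label? q := by
      intro q; rfl
    have hr : ∀ q : List Bool,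
        (BTree.node a l r).label? (true :: q) = r.label? q := by
      intro q; rfl
    have hroot : (BTree.node a l r).label? [] = some a := rfl
    have e1 : List.filter
        ((fun p => ((((BTree.node a l r).label? p).map g).getD false)) ∘
          List.cons false) (poss l) =
        List.filter (fun p => ((l.label? p).map g).getD false) (poss l) := by
      apply List.filter_congr
      intro x _
      simp [Function.comp, hl]
    have e2 : List.filter
        ((fun p => ((((BTree.node a l r).label? p).map g).getD false)) ∘
          List.cons true) (poss r) =
        List.filter (fun p => ((r.label? p).map g).getD false) (poss r) := by
      apply List.filter_congr
      intro x _
      simp [Function.comp, hr]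
    simp only [poss, bcount, List.filter_cons, List.filter_append,
      List.filter_map, e1, e2, hroot, Option.map_some, Option.getD_some]
    by_cases h : g a
    · simp [h, ihl, ihr]; omega
    · simp [h, ihl, ihr]

end BTree

/-- Under conditions (1)–(4) of the EBVASS-to-FO2 encoding, at the root of the
tree the number of `I_i`-labeled nodes equals the number of `D_i`-labeled
nodes. -/
theorem encoding_counters_zero_at_root {L D : Type} (isD isI : L → Bool)
    (t : BTree (L × D))
    (h1 : CondD_key isD t) (h2 : CondI_key isI t)
    (h3 : CondD_matched isD isI t) (h4 : CondI_matched isD isI t) :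
    bcount (fun x => isI x.1) t = bcount (fun x => isD x.1) t := by
  classical
  -- positions of I-labeled and D-labeled nodes
  set fI : List Bool → Bool :=
    fun p => ((t.label? p).map (fun x => isI x.1)).getD false with hfI
  set fD : List Bool → Bool :=
    fun p => ((t.label? p).map (fun x => isD x.1)).getD false with hfD
  have memI : ∀ p : List Bool, fI p = true ↔
      ∃ l d, t.label? p = some (l, d) ∧ isI l = true := by
    intro p
    simp only [hfI]
    cases h : t.label? p with
    | none => simp [h]
    | some a =>
      obtain ⟨l0, d0⟩ := a
      simp only [h, Option.map_some, Option.getD_some]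
      constructor
      · intro hi; exact ⟨l0, d0, rfl, hi⟩
      · rintro ⟨l, d, he, hi⟩
        have := (Option.some_inj.mp he)
        rw [(Prod.mk.injEq _ _ _ _).mp this |>.1]
        exact hi
  have memD : ∀ p : List Bool, fD p = true ↔
      ∃ l d, t.label? p = some (l, d) ∧ isD l = true := by
    intro p
    simp only [hfD]
    cases h : t.label? p with
    | none => simp [h]
    | some a =>
      obtain ⟨l0, d0⟩ := a
      simp only [h, Option.map_some, Option.getD_some]
      constructor
      · intro hi; exact ⟨l0, d0, rfl, hi⟩
      · rintro ⟨l, d, he, hi⟩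
        have := (Option.some_inj.mp he)
        rw [(Prod.mk.injEq _ _ _ _).mp this |>.1]
        exact hi
  have hposs : ∀ p l (d : D), t.label? p = some (l, d) → p ∈ t.poss := by
    intro p l d h
    rw [BTree.mem_poss]
    unfold BTree.label? at h
    cases hg : t.get? p with
    | none => rw [hg] at h; simp at h
    | some _ => simp
  -- the two sets of positions
  set SI := ((t.poss).filter fI).toFinset with hSI
  set SD := ((t.poss).filter fD).toFinset with hSD
  have memSI : ∀ p, p ∈ SI ↔
      ∃ l d, t.label? p = some (l, d) ∧ isI l = true := by
    intro p
    rw [hSI, List.mem_toFinset, List.mem_filter, ← memI]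
    constructor
    · rintro ⟨_, h⟩; exact h
    · intro h
      refine ⟨?_, h⟩
      obtain ⟨l, d, he, _⟩ := (memI p).mp h
      exact hposs p l d he
  have memSD : ∀ p, p ∈ SD ↔
      ∃ l d, t.label? p = some (l, d) ∧ isD l = true := by
    intro p
    rw [hSD, List.mem_toFinset, List.mem_filter, ← memD]
    constructor
    · rintro ⟨_, h⟩; exact h
    · intro h
      refine ⟨?_, h⟩
      obtain ⟨l, d, he, _⟩ := (memD p).mp h
      exact hposs p l d he
  -- the matching predicate
  set Q : List Bool → List Bool → Prop :=
    fun p q => ∃ d : D, (∃ l, t.label? p = some (l, d)) ∧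
      (∃ l', t.label? q = some (l', d)) with hQ
  -- map from SI to SD
  set F : List Bool → List Bool := fun p =>
    if h : ∃ q, Q p q ∧ (∃ l' d, t.label? q = some (l', d) ∧ isD l' = true)
    then h.choose else p with hF
  set G : List Bool → List Bool := fun p =>
    if h : ∃ q, Q p q ∧ (∃ l' d, t.label? q = some (l', d) ∧ isI l' = true)
    then h.choose else p with hG
  have cardLE1 : SI.card ≤ SD.card := by
    apply Finset.card_le_card_of_injOn F
    · intro p hp
      obtain ⟨l, d, he, hi⟩ := (memSI p).mp hp
      obtain ⟨q, r, l', _, _, hq, hd⟩ := h4 p l d he hi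
      have hex : ∃ q, Q p q ∧
          (∃ l' d, t.label? q = some (l', d) ∧ isD l' = true) :=
        ⟨q, ⟨d, ⟨l, he⟩, ⟨l', hq⟩⟩, ⟨l', d, hq, hd⟩⟩
      rw [hF]
      simp only [dif_pos hex]
      obtain ⟨⟨d0, _, ⟨l0, hq0⟩⟩, ⟨l1, d1, hq1, hd1⟩⟩ := hex.choose_spec
      exact (memSD _).mpr ⟨l1, d1, hq1, hd1⟩
    · intro p hp p' hp' heq
      obtain ⟨l, d, he, hi⟩ := (memSI p).mp hp
      obtain ⟨l2, d2, he2, hi2⟩ := (memSI p').mp hp'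
      obtain ⟨q, r, l', _, _, hq, hd⟩ := h4 p l d he hi
      obtain ⟨q2, r2, l2', _, _, hq2, hd2⟩ := h4 p' l2 d2 he2 hi2
      have hex : ∃ x, Q p x ∧
          (∃ l' d, t.label? x = some (l', d) ∧ isD l' = true) :=
        ⟨q, ⟨d, ⟨l, he⟩, ⟨l', hq⟩⟩, ⟨l', d, hq, hd⟩⟩
      have hex2 : ∃ x, Q p' x ∧
          (∃ l' d, t.label? x = some (l', d) ∧ isD l' = true) :=
        ⟨q2, ⟨d2, ⟨l2, he2⟩, ⟨l2', hq2⟩⟩, ⟨l2', d2, hq2, hd2⟩⟩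
      rw [hF] at heq
      simp only [dif_pos hex, dif_pos hex2] at heq
      obtain ⟨⟨da, ⟨la, hpa⟩, ⟨lb, hqa⟩⟩, _⟩ := hex.choose_spec
      obtain ⟨⟨dc, ⟨lc, hpc⟩, ⟨ld', hqc⟩⟩, _⟩ := hex2.choose_spec
      rw [heq] at hqa
      have h5 := hqa.symm.trans hqc
      injection h5 with h5
      have hdd : da = dc := congrArg Prod.snd h5
      have h6 := hpa.symm.trans he
      injection h6 with h6
      have hda : da = d := congrArg Prod.snd h6
      have h7 := hpc.symm.trans he2
      injection h7 with h7
      have hdc2 : dc = d2 := congrArg Prod.snd h7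
      have hd12 : d = d2 := by rw [← hda, hdd, hdc2]
      subst hd12
      exact h2 p p' l l2 d he he2 hi hi2
  have cardLE2 : SD.card ≤ SI.card := by
    apply Finset.card_le_card_of_injOn G
    · intro p hp
      obtain ⟨l, d, he, hi⟩ := (memSD p).mp hp
      obtain ⟨r, l', _, hq, hd⟩ := h3 p l d he hi
      have hex : ∃ q, Q p q ∧
          (∃ l' d, t.label? q = some (l', d) ∧ isI l' = true) :=
        ⟨p ++ r, ⟨d, ⟨l, he⟩, ⟨l', hq⟩⟩, ⟨l', d, hq, hd⟩⟩
      rw [hG]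
      simp only [dif_pos hex]
      obtain ⟨⟨d0, _, ⟨l0, hq0⟩⟩, ⟨l1, d1, hq1, hd1⟩⟩ := hex.choose_spec
      exact (memSI _).mpr ⟨l1, d1, hq1, hd1⟩
    · intro p hp p' hp' heq
      obtain ⟨l, d, he, hi⟩ := (memSD p).mp hp
      obtain ⟨l2, d2, he2, hi2⟩ := (memSD p').mp hp'
      obtain ⟨r, l', _, hq, hd⟩ := h3 p l d he hi
      obtain ⟨r2, l2', _, hq2, hd2⟩ := h3 p' l2 d2 he2 hi2
      have hex : ∃ x, Q p x ∧
          (∃ l' d, t.label? x = some (l', d) ∧ isI l' = true) :=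
        ⟨p ++ r, ⟨d, ⟨l, he⟩, ⟨l', hq⟩⟩, ⟨l', d, hq, hd⟩⟩
      have hex2 : ∃ x, Q p' x ∧
          (∃ l' d, t.label? x = some (l', d) ∧ isI l' = true) :=
        ⟨p' ++ r2, ⟨d2, ⟨l2, he2⟩, ⟨l2', hq2⟩⟩, ⟨l2', d2, hq2, hd2⟩⟩
      rw [hG] at heq
      simp only [dif_pos hex, dif_pos hex2] at heq
      obtain ⟨⟨da, ⟨la, hpa⟩, ⟨lb, hqa⟩⟩, _⟩ := hex.choose_spec
      obtain ⟨⟨dc, ⟨lc, hpc⟩, ⟨ld', hqc⟩⟩, _⟩ := hex2.choose_spec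
      rw [heq] at hqa
      have h5 := hqa.symm.trans hqc
      injection h5 with h5
      have hdd : da = dc := congrArg Prod.snd h5
      have h6 := hpa.symm.trans he
      injection h6 with h6
      have hda : da = d := congrArg Prod.snd h6
      have h7 := hpc.symm.trans he2
      injection h7 with h7
      have hdc2 : dc = d2 := congrArg Prod.snd h7
      have hd12 : d = d2 := by rw [← hda, hdd, hdc2]
      subst hd12
      exact h1 p p' l l2 d he he2 hi hi2
  have hcard : SI.card = SD.card := le_antisymm cardLE1 cardLE2
  have cI : SI.card = ((t.poss).filter fI).length := by
    rw [hSI, List.toFinset_card_of_nodup (t.nodup_poss.filter _)]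
  have cD : SD.card = ((t.poss).filter fD).length := by
    rw [hSD, List.toFinset_card_of_nodup (t.nodup_poss.filter _)]
  rw [BTree.bcount_eq_length, BTree.bcount_eq_length, ← cI, ← cD]
  exact hcard
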